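/- Let z1, z2, z3, z4 be four distinct points on the ideal boundary ℝ ∪ {∞} of the upper half-plane, arranged as vertices of an ideal quadrilateral, and choose pairwise disjoint horocycles centered at these points. For ideal points z_i, z_j, let λ_{ij} = exp(μ_{ij}/2) denote the lambda length, where μ_{ij} is the signed hyperbolic distance along the geodesic from z_i to z_j between its intersection points with the two horocycles. Then the cross ratio Y = ((z1−z2)(z3−z4))/((z2−z3)(z1−z4)) satisfies Y = (λ_{12} λ_{34})/(λ_{23} λ_{14}). In particular, the right-hand side is independent of the choice of horocycles. -/

import Mathlib

open Complex

/-- The hyperbolic distance between two points of the upper half-plane (represented as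
complex numbers with positive imaginary part), given by the standard formula
`d(u,v) = 2 arsinh(|u − v| / (2 √(Im u · Im v)))` for the metric `|dz|²/Im(z)²`. -/
noncomputable def hypDist (u v : ℂ) : ℝ :=
  2 * Real.arsinh (‖u - v‖ / (2 * Real.sqrt (u.im * v.im)))

/-- The horocycle centered at the finite ideal point `p ∈ ℝ` with Euclidean diameter `d`:
the Euclidean circle in the upper half-plane tangent to `ℝ` at `p`. -/
noncomputable def horocycle (p d : ℝ) : Set ℂ :=
  Metric.sphere ((p : ℂ) + (d / 2) * Complex.I) (d / 2)

/-- The complete geodesic of the upper half-plane with ideal endpoints `p, q ∈ ℝ`: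
the Euclidean semicircle over the segment `[p,q]`. -/
noncomputable def idealGeodesic (p q : ℝ) : Set ℂ :=
  {w : ℂ | 0 < w.im ∧ ‖w - (((p + q) / 2 : ℝ) : ℂ)‖ = |p - q| / 2}

lemma mem_horocycle_iff {p dd : ℝ} (hdd : 0 ≤ dd) (w : ℂ) :
    w ∈ horocycle p dd ↔ (w.re - p)^2 + w.im^2 = dd * w.im := by
  unfold horocycle
  rw [Metric.mem_sphere, Complex.dist_eq, ← Real.sqrt_sq (by positivity : (0:ℝ) ≤ dd/2),
    Complex.norm_def, Real.sqrt_inj (normSq_nonneg _) (by positivity),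
    show ((dd:ℂ)/2) = (((dd/2:ℝ)):ℂ) by norm_num]
  simp only [Complex.normSq_apply, Complex.sub_re, Complex.sub_im, Complex.add_re,
    Complex.add_im, Complex.ofReal_re, Complex.ofReal_im, Complex.mul_re, Complex.mul_im,
    Complex.I_re, Complex.I_im]
  constructor <;> intro h <;> nlinarith [h]

lemma mem_idealGeodesic_iff {p q : ℝ} (w : ℂ) :
    w ∈ idealGeodesic p q ↔ 0 < w.im ∧ (w.re - (p+q)/2)^2 + w.im^2 = ((p-q)/2)^2 := by
  unfold idealGeodesic
  simp only [Set.mem_setOf_eq]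
  refine and_congr_right fun _ => ?_
  rw [← Real.sqrt_sq (by positivity : (0:ℝ) ≤ |p-q|/2),
    Complex.norm_def, Real.sqrt_inj (normSq_nonneg _) (by positivity)]
  simp only [Complex.normSq_apply, Complex.sub_re, Complex.sub_im, Complex.ofReal_re,
    Complex.ofReal_im]
  constructor <;> intro h <;> nlinarith [h, _root_.sq_abs (p - q)]

/-- Explicit coordinates of the intersection of the geodesic from `p` to `q` with
the horocycle of diameter `a` at `p`. -/
lemma coords {p q a : ℝ} (hpq : p ≠ q) (ha : 0 < a) {u : ℂ}
    (hg : u ∈ idealGeodesic p q) (hh : u ∈ horocycle p a) :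
    u.re = (p + q)/2 + ((q - p)/2) * (a^2 - (q - p)^2)/(a^2 + (q - p)^2) ∧
    u.im = (q - p)^2 * a / (a^2 + (q - p)^2) := by
  rw [mem_idealGeodesic_iff] at hg
  rw [mem_horocycle_iff ha.le] at hh
  obtain ⟨hy, hg⟩ := hg
  set T : ℝ := u.re - (p + q)/2 with hT
  set Y : ℝ := u.im with hY
  set s : ℝ := (q - p)/2 with hs
  have hs0 : s ≠ 0 := by
    simp only [hs]; intro h; apply hpq; linarith [h]
  have hden : a^2 + 4*s^2 > 0 := by positivity
  -- from the two circle equations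
  have hre : u.re - p = T + s := by rw [hT, hs]; ring
  rw [hre] at hh
  have hs2 : ((p - q)/2)^2 = s^2 := by rw [hs]; ring
  rw [hs2] at hg
  have h4 : Y^2 = s^2 - T^2 := by linear_combination hg
  have h3 : a * Y = 2*s*(T + s) := by linear_combination hg - hh
  have h5 : T + s ≠ 0 := by
    intro h0
    rw [h0, mul_zero] at h3
    nlinarith [h3, hy, ha]
  have h6 : 4*s^2*(T + s) = a^2*(s - T) := by
    have hkey : (T + s) * (4*s^2*(T + s) - a^2*(s - T)) = 0 := by nlinarith [h3, h4]
    rcases mul_eq_zero.mp hkey with h | h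
    · exact absurd h h5
    · linarith
  have hTval : T = s * (a^2 - 4*s^2) / (a^2 + 4*s^2) := by
    field_simp
    nlinarith [h6]
  have hYval : Y = 4*s^2*a / (a^2 + 4*s^2) := by
    have : a * Y = a * (4*s^2*a / (a^2 + 4*s^2)) := by
      rw [h3, hTval]; field_simp; ring
    exact mul_left_cancel₀ (ne_of_gt ha) this
  constructor
  · have : u.re = T + (p + q)/2 := by rw [hT]; ring
    rw [this, hTval, hs]
    have h4s : a^2 + 4*((q-p)/2)^2 = a^2 + (q-p)^2 := by ring
    rw [h4s]
    ring
  · rw [hYval, hs]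
    have h4s : a^2 + 4*((q-p)/2)^2 = a^2 + (q-p)^2 := by ring
    rw [h4s]
    ring

/-- If the horocycles at `p` and `q` are disjoint, then `a*b ≤ (q-p)^2`. -/
lemma disjoint_horocycles_le {p q a b : ℝ} (hpq : p < q) (ha : 0 < a) (hb : 0 < b)
    (h : Disjoint (horocycle p a) (horocycle q b)) : a * b ≤ (q - p)^2 := by
  by_contra hlt
  push_neg at hlt
  set L : ℝ := q - p with hL
  have hL0 : 0 < L := by simp only [hL]; linarith
  set A : ℝ := a^2 + L^2 with hA
  have hA0 : 0 < A := by positivity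
  -- the intersection point of the geodesic with the horocycle at p
  set u : ℂ := ⟨p + L * a^2 / A, L^2 * a / A⟩ with hu
  have hure : u.re = p + L * a^2 / A := rfl
  have huim : u.im = L^2 * a / A := rfl
  have hAne : A ≠ 0 := hA0.ne'
  have huh : u ∈ horocycle p a := by
    rw [mem_horocycle_iff ha.le, hure, huim]
    field_simp [hAne]
    ring
  have hph : (p : ℂ) ∈ horocycle p a := by
    rw [mem_horocycle_iff ha.le]
    simp
  -- the function measuring membership in horocycle q b
  set f : ℂ → ℝ := fun w => (w.re - q)^2 + w.im^2 - b * w.im with hf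
  have hfu : f u < 0 := by
    simp only [hf, hure, huim]
    have key : (p + L * a^2 / A - q)^2 + (L^2 * a / A)^2 - b * (L^2 * a / A)
        = L^2 * (L^2 - a * b) / A := by
      field_simp [hAne]
      ring
    rw [key]
    apply div_neg_of_neg_of_pos _ hA0
    have h1 : L^2 - a*b < 0 := by linarith
    exact mul_neg_of_pos_of_neg (by positivity) h1
  have hfp : 0 < f (p : ℂ) := by
    simp only [hf, Complex.ofReal_re, Complex.ofReal_im]
    nlinarith
  have hconn : IsPreconnected (horocycle p a) := by
    unfold horocycle
    apply isPreconnected_sphere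
    rw [Complex.rank_real_complex]
    norm_num
  have hcont : ContinuousOn f (horocycle p a) := by
    apply Continuous.continuousOn
    fun_prop
  have hmem : (0 : ℝ) ∈ Set.Icc (f u) (f (p : ℂ)) := ⟨hfu.le, hfp.le⟩
  obtain ⟨w, hw, hfw⟩ := hconn.intermediate_value huh hph hcont hmem
  have hwq : w ∈ horocycle q b := by
    rw [mem_horocycle_iff hb.le]
    simp only [hf] at hfw
    linarith [hfw]
  exact Set.disjoint_left.mp h hw hwq

/-- The lambda length between two disjoint horocycles at `p` and `q`. -/
lemma lambda_length {p q a b : ℝ} (hpq : p < q) (ha : 0 < a) (hb : 0 < b)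
    (hab : a * b ≤ (q - p)^2) {u v : ℂ}
    (hug : u ∈ idealGeodesic p q) (huh : u ∈ horocycle p a)
    (hvg : v ∈ idealGeodesic q p) (hvh : v ∈ horocycle q b) :
    Real.exp (hypDist u v / 2) = (q - p) / Real.sqrt (a * b) := by
  obtain ⟨hure, huim⟩ := coords hpq.ne ha hug huh
  obtain ⟨hvre, hvim⟩ := coords hpq.ne' hb hvg hvh
  have hL0 : 0 < q - p := by linarith
  have hA0 : (0:ℝ) < a^2 + (q-p)^2 := by positivity
  have hB0 : (0:ℝ) < b^2 + (q-p)^2 := by positivity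
  have hB0' : (0:ℝ) < b^2 + (p-q)^2 := by positivity
  have hab0 : (0:ℝ) < a * b := by positivity
  have hm0 : 0 < Real.sqrt (a*b) := Real.sqrt_pos.mpr hab0
  have hm2 : (Real.sqrt (a*b))^2 = a*b := Real.sq_sqrt hab0.le
  have him : u.im * v.im = (q-p)^4*(a*b)/((a^2+(q-p)^2)*(b^2+(q-p)^2)) := by
    rw [huim, hvim]
    field_simp [hA0.ne', hB0'.ne']
    ring
  have habs2 : (‖u - v‖)^2
      = (q-p)^2*((q-p)^2 - a*b)^2/((a^2+(q-p)^2)*(b^2+(q-p)^2)) := by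
    rw [Complex.sq_norm, Complex.normSq_apply, Complex.sub_re, Complex.sub_im,
      hure, huim, hvre, hvim]
    field_simp [hA0.ne', hB0'.ne']
    ring
  have huv0 : 0 < u.im * v.im := by
    rw [him]; positivity
  set x : ℝ := ‖u - v‖ / (2 * Real.sqrt (u.im * v.im)) with hxdef
  have hx0 : 0 ≤ x := by positivity
  have hx2 : x^2 = ((q-p)^2 - a*b)^2 / (4*(q-p)^2*(a*b)) := by
    rw [hxdef, div_pow, mul_pow, Real.sq_sqrt huv0.le, habs2, him]
    field_simp [hA0.ne', hB0.ne', hab0.ne', hL0.ne']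
    ring
  have hxval : x = ((q-p)^2 - a*b) / (2*(q-p)*Real.sqrt (a*b)) := by
    have h1 : 0 ≤ ((q-p)^2 - a*b) / (2*(q-p)*Real.sqrt (a*b)) :=
      div_nonneg (by linarith) (by positivity)
    calc x = Real.sqrt (x^2) := (Real.sqrt_sq hx0).symm
    _ = Real.sqrt ((((q-p)^2 - a*b) / (2*(q-p)*Real.sqrt (a*b)))^2) := by
        rw [hx2]; congr 1
        rw [div_pow, mul_pow, mul_pow, hm2]; ring
    _ = _ := Real.sqrt_sq h1
  have hsq : Real.sqrt (1 + x^2) = ((q-p)^2 + a*b)/(2*(q-p)*Real.sqrt (a*b)) := by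
    have h2 : 1 + x^2 = (((q-p)^2 + a*b)/(2*(q-p)*Real.sqrt (a*b)))^2 := by
      rw [hx2, div_pow, mul_pow, mul_pow, hm2]
      field_simp [hab0.ne', hL0.ne']
      ring
    rw [h2, Real.sqrt_sq (div_nonneg (by positivity) (by positivity))]
  have hhd : hypDist u v / 2 = Real.arsinh x := by
    rw [hypDist, hxdef]; ring
  rw [hhd, Real.exp_arsinh, hsq, hxval, ← add_div]
  rw [div_eq_div_iff (by positivity) hm0.ne']
  ring

/-- **Penner.** Let `z 0 < z 1 < z 2 < z 3` be four points on the ideal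
boundary `ℝ` of the upper half-plane, vertices of an ideal quadrilateral, with pairwise
disjoint horocycles of diameters `d i` centered at them.  For `i ≠ j` let `P i j` be the
intersection point of the geodesic from `z i` to `z j` with the horocycle at `z i`, let
`μ i j = hypDist (P i j) (P j i)` be the hyperbolic distance along the geodesic between
the two horocycles, and `λ_{ij} = exp(μ_{ij}/2)` the lambda length.  Then the cross ratio
`Y = ((z₁−z₂)(z₃−z₄))/((z₂−z₃)(z₁−z₄))` equals `(λ₁₂ λ₃₄)/(λ₂₃ λ₁₄)`.  In particular the
right-hand side is independent of the choice of horocycles. -/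
theorem crossRatio_eq_lambdaLength_ratio
    (z : Fin 4 → ℝ) (hz : StrictMono z)
    (d : Fin 4 → ℝ) (hd : ∀ i, 0 < d i)
    (hdisj : ∀ i j, i ≠ j → Disjoint (horocycle (z i) (d i)) (horocycle (z j) (d j)))
    (P : Fin 4 → Fin 4 → ℂ)
    (hPgeo : ∀ i j, i ≠ j → P i j ∈ idealGeodesic (z i) (z j))
    (hPhoro : ∀ i j, i ≠ j → P i j ∈ horocycle (z i) (d i))
    (μ : Fin 4 → Fin 4 → ℝ)
    (hμ : ∀ i j, i ≠ j → μ i j = hypDist (P i j) (P j i))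
    (lam : Fin 4 → Fin 4 → ℝ)
    (hlam : ∀ i j, i ≠ j → lam i j = Real.exp (μ i j / 2)) :
    ((z 0 - z 1) * (z 2 - z 3)) / ((z 1 - z 2) * (z 0 - z 3))
      = (lam 0 1 * lam 2 3) / (lam 1 2 * lam 0 3) := by
  have key : ∀ i j : Fin 4, i ≠ j → z i < z j →
      lam i j = (z j - z i) / Real.sqrt (d i * d j) := by
    intro i j hne hij
    rw [hlam i j hne, hμ i j hne]
    exact lambda_length hij (hd i) (hd j)
      (disjoint_horocycles_le hij (hd i) (hd j) (hdisj i j hne))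
      (hPgeo i j hne) (hPhoro i j hne) (hPgeo j i hne.symm) (hPhoro j i hne.symm)
  have h01 : z 0 < z 1 := hz (by decide)
  have h12 : z 1 < z 2 := hz (by decide)
  have h23 : z 2 < z 3 := hz (by decide)
  have h03 : z 0 < z 3 := hz (by decide)
  have e01 := key 0 1 (by decide) h01
  have e12 := key 1 2 (by decide) h12
  have e23 := key 2 3 (by decide) h23
  have e03 := key 0 3 (by decide) h03
  have hd0 := hd 0
  have hd1 := hd 1
  have hd2 := hd 2
  have hd3 := hd 3
  have hs : Real.sqrt (d 0 * d 1) * Real.sqrt (d 2 * d 3)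
      = Real.sqrt (d 1 * d 2) * Real.sqrt (d 0 * d 3) := by
    rw [← Real.sqrt_mul (by positivity : (0:ℝ) ≤ d 0 * d 1),
      ← Real.sqrt_mul (by positivity : (0:ℝ) ≤ d 1 * d 2)]
    congr 1
    ring
  rw [e01, e12, e23, e03, div_mul_div_comm, div_mul_div_comm, hs,
    div_div_div_cancel_right₀ (by positivity)]
  rw [div_eq_div_iff
    (by exact ne_of_gt (mul_pos_of_neg_of_neg (by linarith) (by linarith)))
    (by exact ne_of_gt (mul_pos (by linarith) (by linarith)))]
  ring
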